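/- Let k be a field, let n ≥ 1, and let k[x₁,…,xₙ] be the polynomial algebra in n variables over k. Fix distinct indices i ≠ j, let α, β ∈ k be nonzero, let f lie in the k-subalgebra generated by the variables other than xᵢ and xⱼ, and let g lie in the k-subalgebra generated by the variables other than xⱼ. If φ and ψ are k-algebra automorphisms of k[x₁,…,xₙ] with φ(xᵢ) = α·xᵢ + f and φ(xₗ) = xₗ for l ≠ i, and ψ(xⱼ) = β·xⱼ + g and ψ(xₗ) = xₗ for l ≠ j, then the composition φ⁻¹∘ψ∘φ satisfies (φ⁻¹∘ψ∘φ)(xⱼ) = β·xⱼ + φ⁻¹(g) and (φ⁻¹∘ψ∘φ)(xₗ) = xₗ for all l ≠ j. (In the notation of the paper: σ(i,α,f)⁻¹σ(j,β,g)σ(i,α,f) = σ(j,β,σ(i,α,f)⁻¹(g)).) -/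
import Mathlib


open MvPolynomial

/-- Relation `σ(i,α,f)⁻¹ σ(j,β,g) σ(i,α,f) = σ(j,β,σ(i,α,f)⁻¹(g))` for elementary
automorphisms of the polynomial algebra `k[x₁,…,xₙ]`, where `i ≠ j`, `f` lies in the
subalgebra generated by the variables other than `xᵢ, xⱼ`, and `g` lies in the
subalgebra generated by the variables other than `xⱼ`. -/
theorem elementary_conjugation (k : Type*) [Field k] (n : ℕ) (hn : 1 ≤ n)
    (i j : Fin n) (hij : i ≠ j)
    (α β : k) (hα : α ≠ 0) (hβ : β ≠ 0)
    (f g : MvPolynomial (Fin n) k)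
    (hf : f ∈ Algebra.adjoin k
      (X '' {l : Fin n | l ≠ i ∧ l ≠ j} : Set (MvPolynomial (Fin n) k)))
    (hg : g ∈ Algebra.adjoin k (X '' {l : Fin n | l ≠ j} : Set (MvPolynomial (Fin n) k)))
    (φ ψ : MvPolynomial (Fin n) k ≃ₐ[k] MvPolynomial (Fin n) k)
    (hφi : φ (X i) = C α * X i + f)
    (hφ : ∀ l : Fin n, l ≠ i → φ (X l) = X l)
    (hψj : ψ (X j) = C β * X j + g)
    (hψ : ∀ l : Fin n, l ≠ j → ψ (X l) = X l) :
    φ.symm (ψ (φ (X j))) = C β * X j + φ.symm g ∧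
    ∀ l : Fin n, l ≠ j → φ.symm (ψ (φ (X l))) = X l := by
  have hsymm : ∀ l : Fin n, l ≠ i → φ.symm (X l) = X l := fun l hl => by
    conv_lhs => rw [← hφ l hl]
    rw [AlgEquiv.symm_apply_apply]
  have hCφ : ∀ r : k, φ.symm (C r) = C r := fun r => by
    simpa [algebraMap_eq] using φ.symm.commutes r
  have hCψ : ∀ r : k, ψ (C r) = C r := fun r => by
    simpa [algebraMap_eq] using ψ.commutes r
  have hψf : ψ f = f := by
    refine Algebra.adjoin_induction (fun x hx => ?_) (fun r => ψ.commutes r)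
      (fun a b _ _ ha hb => by rw [map_add, ha, hb])
      (fun a b _ _ ha hb => by rw [map_mul, ha, hb]) hf
    obtain ⟨l, hl, rfl⟩ := hx
    exact hψ l hl.2
  constructor
  · rw [hφ j (Ne.symm hij), hψj, map_add, map_mul, hCφ,
      hsymm j (Ne.symm hij)]
  · intro l hl
    by_cases hli : l = i
    · subst hli
      rw [hφi, map_add, map_mul, hCψ, hψ l hl, hψf, ← hφi,
        AlgEquiv.symm_apply_apply]
    · rw [hφ l hli, hψ l hl, hsymm l hli]
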